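/- Let W be a vector space over a field K of characteristic zero, T(W) its tensor algebra with shuffle coproduct (W primitive), s = μΔ and s̃ = 1 ⊗ s as above, and N the norm operator acting on W^{⊗n} via N_n = Σ_{i=0}^{n−1} z_n^i. Then 2 · s̃ ∘ N = N ∘ s on ⊕_{i≥1} W^{⊗i}. -/

import Mathlib

open scoped TensorProduct

/-- The shuffle coproduct on the tensor algebra: the algebra map determined by
declaring every element of `W` primitive. -/
noncomputable def comul (K W : Type*) [CommRing K] [AddCommGroup W] [Module K W] :
    TensorAlgebra K W →ₐ[K] TensorAlgebra K W ⊗[K] TensorAlgebra K W :=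
  TensorAlgebra.lift K
    ((Algebra.TensorProduct.includeLeft.toLinearMap ∘ₗ TensorAlgebra.ι K) +
     (Algebra.TensorProduct.includeRight.toLinearMap ∘ₗ TensorAlgebra.ι K))

/-- The modified shuffle operator `s = μ ∘ Δ`. -/
noncomputable def shuffleOp (K W : Type*) [CommRing K] [AddCommGroup W] [Module K W] :
    TensorAlgebra K W →ₗ[K] TensorAlgebra K W :=
  LinearMap.mul' K (TensorAlgebra K W) ∘ₗ (comul K W).toLinearMap

/-- The pure tensor `x₁ ⊗ ⋯ ⊗ xₙ`, realized as the product `ι x₁ ⋯ ι xₙ` in the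
tensor algebra. -/
noncomputable def prodι (K : Type*) {W : Type*} [CommRing K] [AddCommGroup W] [Module K W]
    (l : List W) : TensorAlgebra K W :=
  (l.map (TensorAlgebra.ι K)).prod

/-! ### Combinatorial infrastructure: splittings of a list -/

/-- All ways to split a list into a pair of complementary subsequences. -/
def msplits {α : Type*} : List α → Multiset (List α × List α)
  | [] => {([], [])}
  | a :: l => ((msplits l).map fun p => (a :: p.1, p.2))
      + ((msplits l).map fun p => (p.1, a :: p.2))

lemma msplits_length {α : Type*} : ∀ (l : List α), ∀ p ∈ msplits l,
    p.1.length + p.2.length = l.length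
  | [] => by simp [msplits]
  | a :: l => by
    intro p hp
    simp only [msplits, Multiset.mem_add, Multiset.mem_map] at hp
    rcases hp with ⟨q, hq, rfl⟩ | ⟨q, hq, rfl⟩ <;>
      have := msplits_length l q hq <;> simp <;> omega

lemma msplits_swap {α : Type*} (l : List α) : (msplits l).map Prod.swap = msplits l := by
  induction l with
  | nil => simp [msplits]
  | cons a l ih =>
    conv_rhs => rw [msplits, ← ih]
    rw [msplits, Multiset.map_add, Multiset.map_map, Multiset.map_map, Multiset.map_map,
      Multiset.map_map, add_comm]
    rfl

lemma msplits_append {α : Type*} : ∀ (u v : List α),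
    msplits (u ++ v)
      = (msplits u).bind fun p => (msplits v).map fun q => (p.1 ++ q.1, p.2 ++ q.2)
  | [], v => by simp [msplits]
  | a :: u, v => by
    rw [List.cons_append, msplits, msplits_append u v, msplits, Multiset.add_bind,
      Multiset.map_bind, Multiset.map_bind, Multiset.bind_map, Multiset.bind_map]
    simp [Multiset.map_map, Function.comp]

lemma msplits_regroup {α : Type*} {M : Type*} [AddCommMonoid M] (d : α) :
    ∀ (l : List α) (f : List α → List α → ℕ → M),
    ((msplits l).map fun p => ∑ i ∈ Finset.range p.1.length, f p.1 p.2 i).sum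
      = ∑ j ∈ Finset.range l.length,
          ((msplits (l.drop (j+1))).map fun X =>
            ((msplits (l.take j)).map fun P =>
              f (P.1 ++ l.getD j d :: X.1) (P.2 ++ X.2) P.1.length).sum).sum
  | [], f => by simp [msplits]
  | a :: l, f => by
    have IH1 := msplits_regroup d l (fun A B p => f (a :: A) B (p+1))
    have IH2 := msplits_regroup d l (fun A B p => f A (a :: B) p)
    rw [msplits, Multiset.map_add, Multiset.sum_add, Multiset.map_map, Multiset.map_map]
    simp only [Function.comp, List.length_cons]
    have e1 : ((msplits l).map fun p =>
          ∑ i ∈ Finset.range (p.1.length + 1), f (a :: p.1) p.2 i).sum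
        = ((msplits l).map fun p =>
            ∑ i ∈ Finset.range p.1.length, f (a :: p.1) p.2 (i+1)).sum
          + ((msplits l).map fun p => f (a :: p.1) p.2 0).sum := by
      rw [← Multiset.sum_map_add]
      exact congrArg Multiset.sum (Multiset.map_congr rfl fun p _ =>
        Finset.sum_range_succ' _ _)
    rw [e1, IH1, IH2]
    rw [Finset.sum_range_succ', add_right_comm]
    congr 1
    · rw [← Finset.sum_add_distrib]
      refine Finset.sum_congr rfl fun j hj => ?_
      simp only [List.drop_succ_cons, List.take_succ_cons, List.getD_cons_succ]
      rw [msplits, ← Multiset.sum_map_add]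
      refine congrArg Multiset.sum (Multiset.map_congr rfl fun X _ => ?_)
      rw [Multiset.map_add, Multiset.sum_add, Multiset.map_map, Multiset.map_map]
      simp [Function.comp, List.cons_append]
    · simp [msplits, List.getD_cons_zero]

/-! ### The shuffle operator on pure tensors -/

section Alg
variable {K W : Type*} [CommRing K] [AddCommGroup W] [Module K W]

lemma prodι_nil : prodι K ([] : List W) = 1 := rfl

lemma prodι_cons (a : W) (l : List W) :
    prodι K (a :: l) = TensorAlgebra.ι K a * prodι K l := by
  simp [prodι]

lemma prodι_append (l m : List W) : prodι K (l ++ m) = prodι K l * prodι K m := by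
  simp [prodι]

lemma comul_ι (a : W) :
    comul K W (TensorAlgebra.ι K a)
      = TensorAlgebra.ι K a ⊗ₜ[K] 1 + (1 : TensorAlgebra K W) ⊗ₜ[K] TensorAlgebra.ι K a := by
  simp [comul, TensorAlgebra.lift_ι_apply]

lemma comul_prodι (l : List W) :
    comul K W (prodι K l)
      = ((msplits l).map fun p => prodι K p.1 ⊗ₜ[K] prodι K p.2).sum := by
  induction l with
  | nil => simp [prodι_nil, msplits, Algebra.TensorProduct.one_def]
  | cons a l ih =>
    rw [prodι_cons, map_mul, comul_ι, ih, msplits, Multiset.map_add, Multiset.sum_add,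
      Multiset.map_map, Multiset.map_map, add_mul, ← Multiset.sum_map_mul_left,
      ← Multiset.sum_map_mul_left]
    congr 1 <;>
      exact congrArg Multiset.sum (Multiset.map_congr rfl fun p _ => by
        simp [Function.comp, Algebra.TensorProduct.tmul_mul_tmul, prodι_cons])

lemma shuffleOp_prodι (l : List W) :
    shuffleOp K W (prodι K l) = ((msplits l).map fun p => prodι K (p.1 ++ p.2)).sum := by
  rw [shuffleOp, LinearMap.comp_apply, AlgHom.toLinearMap_apply, comul_prodι,
    map_multiset_sum, Multiset.map_map]
  exact congrArg Multiset.sum (Multiset.map_congr rfl fun p _ => by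
    simp [Function.comp, LinearMap.mul'_apply, prodι_append])

end Alg

/-- `2 · s̃ ∘ N = N ∘ s` on `⊕_{i ≥ 1} W^{⊗i}`.  Here `z` is the cyclic
permutation operator, `N` the norm operator `Σ_{i<n} zⁱ` on `W^{⊗n}`, and `s̃ = 1 ⊗ s`. -/
theorem stmt17 {K W : Type*} [Field K] [CharZero K] [AddCommGroup W] [Module K W]
    (z N st : Module.End K (TensorAlgebra K W))
    (hz : ∀ (l : List W) (a : W), z (prodι K (l ++ [a])) = prodι K (a :: l))
    (hN : ∀ l : List W, N (prodι K l) = ∑ i ∈ Finset.range l.length, (z ^ i) (prodι K l))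
    (hst : ∀ (a : W) (l : List W),
      st (prodι K (a :: l)) = TensorAlgebra.ι K a * shuffleOp K W (prodι K l)) :
    ∀ l : List W, l ≠ [] →
      2 • st (N (prodι K l)) = N (shuffleOp K W (prodι K l)) := by
  -- `z` acts on pure tensors as a cyclic rotation
  have z_rot : ∀ m : List W, m ≠ [] → z (prodι K m) = prodι K (m.rotate (m.length - 1)) := by
    intro m hm
    rcases List.eq_nil_or_concat m with rfl | ⟨L, b, rfl⟩
    · exact absurd rfl hm
    · rw [List.concat_eq_append, hz]
      congr 1
      rw [List.length_append, List.length_singleton, Nat.add_sub_cancel,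
        List.rotate_eq_drop_append_take (by simp), List.drop_left, List.take_left,
        List.singleton_append]
  have zpow_rot : ∀ (i : ℕ) (m : List W), m ≠ [] →
      (z ^ i) (prodι K m) = prodι K (m.rotate (i * (m.length - 1))) := by
    intro i
    induction i with
    | zero => intro m hm; simp
    | succ i ih =>
      intro m hm
      rw [pow_succ, Module.End.mul_apply, z_rot m hm,
        ih _ (by simpa [List.rotate_eq_nil_iff] using hm), List.length_rotate,
        List.rotate_rotate]
      congr 1
      rw [Nat.succ_mul]; ring_nf
  -- the norm operator sums all cyclic rotations
  have sumrot : ∀ m : List W, m ≠ [] →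
      ∑ i ∈ Finset.range m.length, (z ^ i) (prodι K m)
        = ∑ j ∈ Finset.range m.length, prodι K (m.rotate j) := by
    intro m hm
    have hmn : 0 < m.length := List.length_pos_iff.2 hm
    have key : ∀ i ∈ Finset.range m.length, (z ^ i) (prodι K m)
        = prodι K (m.rotate ((m.length - i) % m.length)) := by
      intro i hi
      rw [Finset.mem_range] at hi
      rw [zpow_rot i m hm, ← List.rotate_mod]
      congr 1
      rcases Nat.eq_zero_or_pos i with rfl | hipos
      · simp
      · obtain ⟨i', rfl⟩ : ∃ i', i = i' + 1 := ⟨i - 1, by omega⟩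
        obtain ⟨k, hk⟩ : ∃ k, m.length = i' + 1 + k := ⟨m.length - (i' + 1), by omega⟩
        rw [hk]
        have h2 : (i' + 1) * (i' + 1 + k - 1) = k + i' * (i' + 1 + k) := by
          simp only [show i' + 1 + k - 1 = i' + k from by omega]
          ring
        rw [h2, Nat.add_mul_mod_self_right, show i' + 1 + k - (i' + 1) = k from by omega]
    have hinv : ∀ a < m.length, (m.length - (m.length - a) % m.length) % m.length = a := by
      intro a ha
      rcases Nat.eq_zero_or_pos a with rfl | hpos
      · simp
      · rw [show (m.length - a) % m.length = m.length - a from Nat.mod_eq_of_lt (by omega),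
          show m.length - (m.length - a) = a from by omega, Nat.mod_eq_of_lt ha]
    rw [Finset.sum_congr rfl key]
    refine Finset.sum_nbij' (fun i => (m.length - i) % m.length)
      (fun j => (m.length - j) % m.length)
      (fun a _ => Finset.mem_range.2 (Nat.mod_lt _ hmn))
      (fun a _ => Finset.mem_range.2 (Nat.mod_lt _ hmn))
      (fun a ha => hinv a (Finset.mem_range.1 ha))
      (fun a ha => hinv a (Finset.mem_range.1 ha))
      (fun a _ => rfl)
  intro l hl
  have hn : 0 < l.length := List.length_pos_iff.2 hl
  -- the left-hand side
  have hstO : st (N (prodι K l)) = ∑ j ∈ Finset.range l.length,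
      ((msplits (l.drop (j+1))).map fun X =>
        ((msplits (l.take j)).map fun P =>
          prodι K (l.getD j 0 :: ((X.1 ++ P.1) ++ (X.2 ++ P.2)))).sum).sum := by
    rw [hN, sumrot l hl, map_sum]
    refine Finset.sum_congr rfl fun j hj => ?_
    rw [Finset.mem_range] at hj
    have hrot : l.rotate j = l.getD j 0 :: (l.drop (j+1) ++ l.take j) := by
      rw [List.rotate_eq_drop_append_take hj.le, List.drop_eq_getElem_cons hj,
        List.getD_eq_getElem l 0 hj, List.cons_append]
    rw [hrot, hst, shuffleOp_prodι, msplits_append, Multiset.map_bind, Multiset.sum_bind,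
      ← Multiset.sum_map_mul_left]
    refine congrArg Multiset.sum (Multiset.map_congr rfl fun X _ => ?_)
    rw [← Multiset.sum_map_mul_left, Multiset.map_map]
    refine congrArg Multiset.sum (Multiset.map_congr rfl fun P _ => ?_)
    simp [Function.comp, prodι_cons]
  -- the right-hand side
  have hRHS : N (shuffleOp K W (prodι K l))
      = ((msplits l).map fun p =>
          ∑ i ∈ Finset.range p.1.length, prodι K (p.1.drop i ++ (p.2 ++ p.1.take i))).sum
        + ((msplits l).map fun p =>
          ∑ i ∈ Finset.range p.1.length, prodι K (p.1.drop i ++ (p.2 ++ p.1.take i))).sum := by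
    rw [shuffleOp_prodι, map_multiset_sum, Multiset.map_map]
    have e2 : Multiset.map ((⇑N) ∘ fun p : List W × List W => prodι K (p.1 ++ p.2)) (msplits l)
        = Multiset.map (fun p : List W × List W =>
            (∑ i ∈ Finset.range p.1.length, prodι K (p.1.drop i ++ (p.2 ++ p.1.take i)))
            + ∑ i ∈ Finset.range p.2.length, prodι K (p.2.drop i ++ (p.1 ++ p.2.take i)))
            (msplits l) := by
      refine Multiset.map_congr rfl fun p hp => ?_
      have hlen : p.1.length + p.2.length = l.length := msplits_length l p hp
      have hne : p.1 ++ p.2 ≠ [] := by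
        intro h
        have h1 : p.1.length + p.2.length = 0 := by
          simpa using congrArg List.length h
        omega
      simp only [Function.comp_apply]
      rw [hN, sumrot _ hne, List.length_append, Finset.sum_range_add]
      congr 1
      · refine Finset.sum_congr rfl fun i hi => ?_
        rw [Finset.mem_range] at hi
        congr 1
        rw [List.rotate_eq_drop_append_take (by rw [List.length_append]; omega),
          List.drop_append, List.take_append]
        simp [Nat.sub_eq_zero_of_le hi.le, List.append_assoc]
      · refine Finset.sum_congr rfl fun i hi => ?_
        rw [Finset.mem_range] at hi
        congr 1
        rw [List.rotate_eq_drop_append_take (by rw [List.length_append]; omega),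
          List.drop_append, List.take_append]
        simp [List.drop_eq_nil_of_le, List.take_of_length_le, Nat.add_sub_cancel_left,
          List.append_assoc]
    rw [e2, Multiset.sum_map_add]
    congr 1
    conv_lhs => rw [← msplits_swap l]
    rw [Multiset.map_map]
    rfl
  -- the regrouping of the right-hand side matches the left-hand side
  have hS := msplits_regroup (0 : W) l (fun A B i => prodι K (A.drop i ++ (B ++ A.take i)))
  have hmain : ∑ j ∈ Finset.range l.length,
      ((msplits (l.drop (j+1))).map fun X =>
        ((msplits (l.take j)).map fun P =>
          prodι K (l.getD j 0 :: ((X.1 ++ P.1) ++ (X.2 ++ P.2)))).sum).sum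
      = ((msplits l).map fun p =>
          ∑ i ∈ Finset.range p.1.length, prodι K (p.1.drop i ++ (p.2 ++ p.1.take i))).sum := by
    rw [hS]
    refine Finset.sum_congr rfl fun j hj => ?_
    refine congrArg Multiset.sum (Multiset.map_congr rfl fun X _ => ?_)
    conv_lhs => rw [← msplits_swap (l.take j)]
    rw [Multiset.map_map]
    refine congrArg Multiset.sum (Multiset.map_congr rfl fun P _ => ?_)
    simp [Function.comp, List.drop_left, List.take_left, List.append_assoc]
  rw [hstO, hmain, hRHS, two_nsmul]
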